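/- Let λ ∈ k, λ ≠ 0. For every 1 ≤ i ≤ e−1 and all Λ_e-module homomorphisms g : B(1,λ) → P_i and h : P_i → B(1,λ), the composite h∘g is zero. In particular every endomorphism of B(1,λ) factoring through P_i vanishes. -/

import Mathlib

/-! Common framework: representations of the quiver Q_e / modules over the
generalized Brauer star algebra Λ_e, encoded as a module `V` together with
endomorphisms `v i` (images of the vertex idempotents), `a i` (images of the
arrows; `a i` is the arrow leaving vertex `i`, with `a ⟨e-1⟩` the arrow
`α_e : e → 1`) and `d` (image of the loop `δ`). -/

namespace GBTA

structure PreRep (R : Type) [CommRing R] (e : ℕ) : Type 1 where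
  V : Type
  [instAdd : AddCommGroup V]
  [instMod : Module R V]
  v : Fin e → Module.End R V
  a : Fin e → Module.End R V
  d : Module.End R V

attribute [instance] PreRep.instAdd PreRep.instMod

variable {R : Type} [CommRing R] {e : ℕ}

/-- The (0-based) index of the vertex `e`. -/
def ve (e : ℕ) [NeZero e] : Fin e :=
  ⟨e - 1, by have := Nat.pos_of_ne_zero (NeZero.ne e); omega⟩

/-- The (0-based) index of the vertex `e - 1`. -/
def vem (e : ℕ) [NeZero e] : Fin e :=
  ⟨e - 2, by have := Nat.pos_of_ne_zero (NeZero.ne e); omega⟩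

/-- The cycle `C_i`: the composite of the `e` cyclically consecutive arrows
starting with the arrow leaving vertex `i` (composites written right to left). -/
def cyc [NeZero e] (ρ : PreRep R e) (i : Fin e) : Module.End R ρ.V :=
  (((List.range e).reverse).map fun l => ρ.a (i + Fin.ofNat e l)).prod

/-- The defining relations of the generalized Brauer star algebra `Λ_e`. -/
def Satisfies [NeZero e] (ρ : PreRep R e) : Prop :=
  (∀ i j : Fin e, i ≠ j → ρ.v i * ρ.v j = 0) ∧
  (∀ i : Fin e, ρ.v i * ρ.v i = ρ.v i) ∧
  ((∑ i : Fin e, ρ.v i) = 1) ∧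
  (∀ i : Fin e, ρ.a i = ρ.v (i + 1) * ρ.a i * ρ.v i) ∧
  (ρ.d = ρ.v (ve e) * ρ.d * ρ.v (ve e)) ∧
  (ρ.d * ρ.a (vem e) = 0) ∧
  (ρ.a (ve e) * ρ.d = 0) ∧
  (ρ.d * ρ.d = cyc ρ (ve e) * cyc ρ (ve e)) ∧
  (∀ i : Fin e, i ≠ ve e → ρ.a i * (cyc ρ i * cyc ρ i) = 0)

/-- The space of `Λ_e`-module homomorphisms `ρ → σ`: linear maps commuting with
all the structure maps. -/
def homSet (ρ σ : PreRep R e) : Submodule R (ρ.V →ₗ[R] σ.V) where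
  carrier := {f | (∀ i, f ∘ₗ ρ.v i = σ.v i ∘ₗ f) ∧ (∀ i, f ∘ₗ ρ.a i = σ.a i ∘ₗ f) ∧
    f ∘ₗ ρ.d = σ.d ∘ₗ f}
  add_mem' := by
    rintro f g ⟨hfv, hfa, hfd⟩ ⟨hgv, hga, hgd⟩
    exact ⟨fun i => by simp only [LinearMap.add_comp, LinearMap.comp_add, hfv i, hgv i],
      fun i => by simp only [LinearMap.add_comp, LinearMap.comp_add, hfa i, hga i],
      by simp only [LinearMap.add_comp, LinearMap.comp_add, hfd, hgd]⟩
  zero_mem' := ⟨fun i => by simp, fun i => by simp, by simp⟩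
  smul_mem' := by
    rintro c f ⟨hfv, hfa, hfd⟩
    exact ⟨fun i => by simp only [LinearMap.smul_comp, LinearMap.comp_smul, hfv i],
      fun i => by simp only [LinearMap.smul_comp, LinearMap.comp_smul, hfa i],
      by simp only [LinearMap.smul_comp, LinearMap.comp_smul, hfd]⟩

/-- Projectivity of a `Λ_e`-module, via the lifting property in the category of
`Λ_e`-modules. -/
def IsProjective [NeZero e] (P : PreRep R e) : Prop :=
  Satisfies P ∧
  ∀ (A B : PreRep R e), Satisfies A → Satisfies B →
    ∀ p ∈ homSet A B, Function.Surjective p →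
      ∀ g ∈ homSet P B, ∃ h ∈ homSet P A, p ∘ₗ h = g

/-- An endomorphism `f` of `ρ` factors through a projective `Λ_e`-module. -/
def FactorsThroughProjective [NeZero e] (ρ : PreRep R e) (f : ρ.V →ₗ[R] ρ.V) : Prop :=
  ∃ P : PreRep R e, IsProjective P ∧ ∃ g ∈ homSet ρ P, ∃ h ∈ homSet P ρ, f = h ∘ₗ g

/-- "The stable endomorphism ring of `ρ` is isomorphic to the scalars": the identity
does not factor through a projective, and modulo endomorphisms factoring through
projectives every endomorphism is a scalar multiple of the identity. -/
def StableEndIsoScalars [NeZero e] (ρ : PreRep R e) : Prop :=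
  (¬ FactorsThroughProjective ρ LinearMap.id) ∧
  ∀ f ∈ homSet ρ ρ, ∃ c : R, FactorsThroughProjective ρ (f - c • LinearMap.id)

/-- The linear map on `Fin m → W` sending the `src` coordinate to the `dst`
coordinate through `g`, and killing all other coordinates. -/
def mk1 {m : ℕ} {W : Type} [AddCommGroup W] [Module R W] (src dst : Fin m)
    (g : W →ₗ[R] W) : (Fin m → W) →ₗ[R] (Fin m → W) where
  toFun x := fun r => if r = dst then g (x src) else 0
  map_add' x y := by funext r; by_cases h : r = dst <;> simp [h]
  map_smul' c x := by funext r; by_cases h : r = dst <;> simp [h]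

/-- Projection onto the coordinates satisfying `S`. -/
def prj {m : ℕ} {W : Type} [AddCommGroup W] [Module R W] (S : Fin m → Prop)
    [DecidablePred S] : (Fin m → W) →ₗ[R] (Fin m → W) where
  toFun x := fun r => if S r then x r else 0
  map_add' x y := by funext r; by_cases h : S r <;> simp [h]
  map_smul' c x := by funext r; by_cases h : S r <;> simp [h]

/-- Last row index (`e`, 0-based) among `e+1` rows. -/
def lastRow (e : ℕ) : Fin (e + 1) := ⟨e, Nat.lt_succ_self e⟩

/-- Second-to-last row index (`e-1`, 0-based) among `e+1` rows. -/
def sndRow (e : ℕ) : Fin (e + 1) := ⟨e - 1, by omega⟩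

/-- The vertex carrying each of the `e+1` rows: row `r < e-1` sits at vertex `r`,
rows `e-1` and `e` sit at the vertex `e` (0-based index `e-1`). -/
def vrt (e : ℕ) [NeZero e] : Fin (e + 1) → Fin e := fun r =>
  if h : r.val < e - 1 then ⟨r.val, by omega⟩ else ve e


/-- The `n × n` Jordan block with eigenvalue `lam`. -/
def jordan (R : Type) [CommRing R] (n : ℕ) (lam : R) : Matrix (Fin n) (Fin n) R :=
  Matrix.of fun i j => if i = j then lam else if (j : ℕ) = (i : ℕ) + 1 then 1 else 0

/-- The band module `B(n, lam)`. Rows `0, …, e-2` are the components `k^n` at the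
vertices `1, …, e-1`; rows `e-1` and `e` are the two copies of `k^n` at vertex `e`. -/
@[reducible] def band (R : Type) [CommRing R] (e : ℕ) [NeZero e] (n : ℕ) (lam : R) : PreRep R e where
  V := Fin (e + 1) → Fin n → R
  v i := prj fun r => vrt e r = i
  a j :=
    if j.val = e - 1 then mk1 (sndRow e) ⟨0, by omega⟩ LinearMap.id
    else if j.val = e - 2 then mk1 ⟨e - 2, by omega⟩ (lastRow e) LinearMap.id
    else mk1 ⟨j.val, Nat.lt_succ_of_lt j.isLt⟩ ⟨j.val + 1, Nat.succ_lt_succ j.isLt⟩ LinearMap.id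
  d := mk1 (sndRow e) (lastRow e) (Matrix.mulVecLin (jordan R n lam))

/-- The band module `B(1, s)` (with `δ` acting through the scalar `s`); the standard
basis vector `c_i` (`1 ≤ i ≤ e-1`) is the `i-1`-st coordinate, `c_e` the `e-1`-st and
`c_{e+1}` the `e`-th. -/
@[reducible] def band1 (R : Type) [CommRing R] (e : ℕ) [NeZero e] (s : R) : PreRep R e where
  V := Fin (e + 1) → R
  v i := prj fun r => vrt e r = i
  a j :=
    if j.val = e - 1 then mk1 (sndRow e) ⟨0, by omega⟩ LinearMap.id
    else if j.val = e - 2 then mk1 ⟨e - 2, by omega⟩ (lastRow e) LinearMap.id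
    else mk1 ⟨j.val, Nat.lt_succ_of_lt j.isLt⟩ ⟨j.val + 1, Nat.succ_lt_succ j.isLt⟩ LinearMap.id
  d := mk1 (sndRow e) (lastRow e) (s • LinearMap.id)

/-- The projective module `P_e`, with basis `b_{i,1}, b_{i,2}` (row `i-1`) for
`1 ≤ i ≤ e-1` and `b_{e,1}, b_{e,2}` (row `e-1`), `b_{e,3}, b_{e,4}` (row `e`). -/
@[reducible] def Pe (R : Type) [CommRing R] (e : ℕ) [NeZero e] : PreRep R e where
  V := Fin (e + 1) → Fin 2 → R
  v i := prj fun r => vrt e r = i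
  a j :=
    if j.val = e - 1 then mk1 (sndRow e) ⟨0, by omega⟩ LinearMap.id
    else if j.val = e - 2 then
      mk1 ⟨e - 2, by omega⟩ (sndRow e) (Matrix.mulVecLin !![0, 0; 1, 0])
        + mk1 ⟨e - 2, by omega⟩ (lastRow e) (Matrix.mulVecLin !![0, 0; 0, 1])
    else mk1 ⟨j.val, Nat.lt_succ_of_lt j.isLt⟩ ⟨j.val + 1, Nat.succ_lt_succ j.isLt⟩ LinearMap.id
  d := mk1 (sndRow e) (lastRow e) (Matrix.mulVecLin !![1, 0; 0, 0])
    + mk1 (lastRow e) (lastRow e) (Matrix.mulVecLin !![0, 0; 1, 0])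

/-- `Mdef R e τ`: the representation with basis `m_1, …, m_{e+1}` (rows `0, …, e`),
`α_j(m_j) = m_{j+1}` for `j ≤ e-2`, `α_{e-1}(m_{e-1}) = τ · m_{e+1}`,
`α_e(m_e) = m_1`, `δ(m_e) = m_{e+1}`.  For `τ = 0` this is the string module `W`. -/
@[reducible] def Mdef (R : Type) [CommRing R] (e : ℕ) [NeZero e] (t : R) : PreRep R e where
  V := Fin (e + 1) → R
  v i := prj fun r => vrt e r = i
  a j :=
    if j.val = e - 1 then mk1 (sndRow e) ⟨0, by omega⟩ LinearMap.id
    else if j.val = e - 2 then mk1 ⟨e - 2, by omega⟩ (lastRow e) (t • LinearMap.id)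
    else mk1 ⟨j.val, Nat.lt_succ_of_lt j.isLt⟩ ⟨j.val + 1, Nat.succ_lt_succ j.isLt⟩ LinearMap.id
  d := mk1 (sndRow e) (lastRow e) LinearMap.id

/-- The uniserial module `U_{[i,j]}` (with `1 ≤ i ≤ j ≤ e`, 1-based). -/
@[reducible] def U (R : Type) [CommRing R] (e i j : ℕ) : PreRep R e where
  V := Fin (j + 1 - i) → R
  v t := prj fun r => i - 1 + r.val = t.val
  a t :=
    if h : i ≤ t.val + 1 ∧ t.val + 1 ≤ j - 1 then
      mk1 ⟨t.val + 1 - i, by omega⟩ ⟨t.val + 2 - i, by omega⟩ LinearMap.id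
    else 0
  d := 0

/-- The uniserial projective module `P_i` (`i0` is the 0-based index of the vertex),
with basis `p_0, …, p_{2e}` following the cycle of arrows twice around. -/
@[reducible] def Puni (R : Type) [CommRing R] (e : ℕ) [NeZero e] (i0 : ℕ) : PreRep R e where
  V := Fin (2 * e + 1) → R
  v t := prj fun r => (i0 + r.val) % e = t.val
  a t := ∑ l : Fin (2 * e),
    if (i0 + l.val) % e = t.val then mk1 l.castSucc l.succ LinearMap.id else 0
  d := 0

/-- The simple module `S_e` at the vertex `e`. -/
@[reducible] def Se (R : Type) [CommRing R] (e : ℕ) [NeZero e] : PreRep R e where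
  V := R
  v i := if i = ve e then 1 else 0
  a _ := 0
  d := 0

/-- Block upper triangular endomorphism `(x, y) ↦ (f x + θ y, f y)` of `V × V`. -/
def blk {V : Type} [AddCommGroup V] [Module R V] (f th : Module.End R V) :
    Module.End R (V × V) where
  toFun p := (f p.1 + th p.2, f p.2)
  map_add' p q := by
    simp only [Prod.fst_add, Prod.snd_add, map_add, Prod.mk_add_mk, Prod.mk.injEq, and_true]
    abel
  map_smul' c p := by
    simp only [Prod.smul_fst, Prod.smul_snd, map_smul, Prod.smul_mk, Prod.mk.injEq,
      smul_add, RingHom.id_apply, and_self]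

section Ext
variable [NeZero e]

/-- The data of a self-extension of `ρ`: for each generator of `Λ_e`, the
off-diagonal block of its action on `ρ.V × ρ.V`. -/
abbrev Cochain (ρ : PreRep R e) : Type :=
  (Fin e → Module.End R ρ.V) × (Fin e → Module.End R ρ.V) × Module.End R ρ.V

/-- The self-extension of `ρ` determined by the cochain `θ`. -/
@[reducible] def extRep (ρ : PreRep R e) (th : Cochain ρ) : PreRep R e where
  V := ρ.V × ρ.V
  v i := blk (ρ.v i) (th.1 i)
  a i := blk (ρ.a i) (th.2.1 i)
  d := blk ρ.d th.2.2

/-- `θ` is a cocycle precisely when the corresponding extension is a `Λ_e`-module. -/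
def IsCocycle (ρ : PreRep R e) (th : Cochain ρ) : Prop := Satisfies (extRep ρ th)

/-- The coboundary of `φ`; extensions differing by a coboundary are equivalent. -/
def bnd (ρ : PreRep R e) (phi : Module.End R ρ.V) : Cochain ρ :=
  (fun i => ρ.v i * phi - phi * ρ.v i, fun i => ρ.a i * phi - phi * ρ.a i,
    ρ.d * phi - phi * ρ.d)

/-- `Ext¹_{Λ_e}(ρ, ρ)`, i.e. the space of self-extensions of `ρ` modulo equivalence
(equivalently cocycles modulo coboundaries), is one-dimensional. -/
def ExtSelfOneDimensional (ρ : PreRep R e) : Prop :=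
  ∃ th0 : Cochain ρ, IsCocycle ρ th0 ∧ (∀ phi, th0 ≠ bnd ρ phi) ∧
    ∀ th : Cochain ρ, IsCocycle ρ th → ∃ (c : R) (phi : Module.End R ρ.V),
      th = c • th0 + bnd ρ phi

end Ext


/-- The endomorphism algebra of a representation. -/
def endAlg (ρ : PreRep R e) : Subalgebra R (Module.End R ρ.V) where
  carrier := {f | (∀ i, f * ρ.v i = ρ.v i * f) ∧ (∀ i, f * ρ.a i = ρ.a i * f) ∧
    f * ρ.d = ρ.d * f}
  mul_mem' := by
    rintro f g ⟨hfv, hfa, hfd⟩ ⟨hgv, hga, hgd⟩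
    refine ⟨fun i => ?_, fun i => ?_, ?_⟩
    · rw [mul_assoc, hgv i, ← mul_assoc, hfv i, mul_assoc]
    · rw [mul_assoc, hga i, ← mul_assoc, hfa i, mul_assoc]
    · rw [mul_assoc, hgd, ← mul_assoc, hfd, mul_assoc]
  one_mem' := ⟨fun i => by rw [one_mul, mul_one], fun i => by rw [one_mul, mul_one],
    by rw [one_mul, mul_one]⟩
  add_mem' := by
    rintro f g ⟨hfv, hfa, hfd⟩ ⟨hgv, hga, hgd⟩
    exact ⟨fun i => by rw [add_mul, mul_add, hfv i, hgv i],
      fun i => by rw [add_mul, mul_add, hfa i, hga i],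
      by rw [add_mul, mul_add, hfd, hgd]⟩
  zero_mem' := ⟨fun i => by rw [zero_mul, mul_zero], fun i => by rw [zero_mul, mul_zero],
    by rw [zero_mul, mul_zero]⟩
  algebraMap_mem' c :=
    ⟨fun i => Algebra.commutes c (ρ.v i), fun i => Algebra.commutes c (ρ.a i),
      Algebra.commutes c ρ.d⟩

/-- The endomorphism `τ` of `B(1,λ)` (and of `W`): `c_e ↦ c_{e+1}`, all other
standard basis vectors to `0`. -/
def tau (R : Type) [CommRing R] (e : ℕ) : (Fin (e + 1) → R) →ₗ[R] (Fin (e + 1) → R) :=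
  mk1 (sndRow e) (lastRow e) LinearMap.id

/-- The map `r₁ : B(1,λ) → P_e` (with parameter `μ` the coefficient on `b_{e,3}`):
`c_i ↦ b_{i,2}` for `1 ≤ i ≤ e-1`, `c_e ↦ b_{e,2} + μ b_{e,3}`, `c_{e+1} ↦ b_{e,4}`. -/
def r1 (R : Type) [CommRing R] (e : ℕ) (mu : R) :
    (Fin (e + 1) → R) →ₗ[R] (Fin (e + 1) → Fin 2 → R) where
  toFun x := fun r c => if c = 1 then x r else if r = lastRow e then mu * x (sndRow e) else 0
  map_add' x y := by
    funext r c
    by_cases h : c = 1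
    · simp [h]
    · by_cases h2 : r = lastRow e <;> simp [h, h2, mul_add]
  map_smul' t x := by
    funext r c
    by_cases h : c = 1
    · simp [h]
    · by_cases h2 : r = lastRow e <;> simp [h, h2] <;> ring

/-- The map `r₂ : B(1,λ) → P_e`: `c_e ↦ b_{e,4}`, all other basis vectors to `0`. -/
def r2 (R : Type) [CommRing R] (e : ℕ) :
    (Fin (e + 1) → R) →ₗ[R] (Fin (e + 1) → Fin 2 → R) where
  toFun x := fun r c => if r = lastRow e ∧ c = 1 then x (sndRow e) else 0
  map_add' x y := by
    funext r c
    by_cases h : r = lastRow e ∧ c = 1 <;> simp [h]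
  map_smul' t x := by
    funext r c
    by_cases h : r = lastRow e ∧ c = 1 <;> simp [h]

/-- The map `s₁ : P_e → B(1,λ)`: `b_{e,1} ↦ c_e`, `b_{e,2} ↦ c_{e+1}`,
`b_{e,3} ↦ λ c_{e+1}`, `b_{i,1} ↦ c_i`; zero on `b_{e,4}` and the `b_{i,2}`. -/
def s1 (R : Type) [CommRing R] (e : ℕ) (lam : R) :
    (Fin (e + 1) → Fin 2 → R) →ₗ[R] (Fin (e + 1) → R) where
  toFun y := fun r =>
    if r = lastRow e then y (sndRow e) 1 + lam * y (lastRow e) 0 else y r 0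
  map_add' x y := by
    funext r
    by_cases h : r = lastRow e <;> simp [h, mul_add] <;> ring
  map_smul' t x := by
    funext r
    by_cases h : r = lastRow e <;> simp [h] <;> ring

/-- The map `s₂ : P_e → B(1,λ)`: `b_{e,1} ↦ c_{e+1}`, all other basis vectors to `0`. -/
def s2 (R : Type) [CommRing R] (e : ℕ) :
    (Fin (e + 1) → Fin 2 → R) →ₗ[R] (Fin (e + 1) → R) where
  toFun y := fun r => if r = lastRow e then y (sndRow e) 0 else 0
  map_add' x y := by funext r; by_cases h : r = lastRow e <;> simp [h]
  map_smul' t x := by funext r; by_cases h : r = lastRow e <;> simp [h]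

/-- The map `g : W → P_e`, `w_e ↦ b_{e,3}`, `w_{e+1} ↦ b_{e,4}`, `w_j ↦ 0`. -/
def gW (R : Type) [CommRing R] (e : ℕ) :
    (Fin (e + 1) → R) →ₗ[R] (Fin (e + 1) → Fin 2 → R) where
  toFun x := fun r c =>
    if r = lastRow e then (if c = 0 then x (sndRow e) else x (lastRow e)) else 0
  map_add' x y := by
    funext r c
    by_cases h : r = lastRow e <;> by_cases h2 : c = 0 <;> simp [h, h2]
  map_smul' t x := by
    funext r c
    by_cases h : r = lastRow e <;> by_cases h2 : c = 0 <;> simp [h, h2]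

/-- The map `h : P_e → W`, `b_{e,1} ↦ w_e`, `b_{j,1} ↦ w_j`, `b_{e,3} ↦ w_{e+1}`,
zero on `b_{e,2}`, `b_{e,4}` and the `b_{j,2}`. -/
def hW (R : Type) [CommRing R] (e : ℕ) :
    (Fin (e + 1) → Fin 2 → R) →ₗ[R] (Fin (e + 1) → R) where
  toFun y := fun r => y r 0
  map_add' x y := rfl
  map_smul' t x := rfl



/-- Auxiliary: evaluation of `mk1`. -/
theorem mk1_apply {R : Type} [CommRing R] {m : ℕ} {W : Type} [AddCommGroup W] [Module R W]
    (src dst : Fin m) (gm : W →ₗ[R] W) (x : Fin m → W) (r : Fin m) :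
    mk1 src dst gm x r = if r = dst then gm (x src) else 0 := rfl

/-- Auxiliary: `mk1` with `LinearMap.id` on a `Pi.single` basis vector. -/
theorem mk1_single {R : Type} [CommRing R] {m : ℕ} (src dst r0 : Fin m) (c : R) :
    mk1 src dst (LinearMap.id (R := R) (M := R)) (Pi.single r0 c)
      = if r0 = src then Pi.single dst c else 0 := by
  funext r
  rw [mk1_apply]
  by_cases h : r0 = src
  · by_cases hr : r = dst
    · subst h; subst hr; simp
    · subst h; simp [hr, Pi.single_eq_of_ne hr]
  · by_cases hr : r = dst
    · subst hr; simp [h, Pi.single_eq_of_ne (Ne.symm h)]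
    · simp [h, hr]

/-- Auxiliary key lemma: any composite `B(1,λ) → P_i → B(1,λ)` vanishes. -/
theorem key (k : Type) [Field k] (e : ℕ) (he : 2 ≤ e) [NeZero e]
    (lam : k) (hlam : lam ≠ 0) (i0 : ℕ) (hi0 : i0 + 2 ≤ e) :
    ∀ g ∈ homSet (band1 k e lam) (Puni k e i0),
      ∀ h ∈ homSet (Puni k e i0) (band1 k e lam), h ∘ₗ g = 0 := by
  intro g hg h hh
  obtain ⟨gv, ga, gd⟩ := hg
  obtain ⟨hv, ha, hd⟩ := hh
  -- band1 arrow maps, three branches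
  have aB3 : ∀ (j : Fin e) (src dst : Fin (e+1)), j.val + 3 ≤ e → src.val = j.val →
      dst.val = j.val + 1 → (band1 k e lam).a j = mk1 src dst LinearMap.id := by
    intro j src dst h1 h2 h3
    show (if j.val = e - 1 then mk1 (sndRow e) ⟨0, by omega⟩ LinearMap.id
      else if j.val = e - 2 then mk1 ⟨e - 2, by omega⟩ (lastRow e) LinearMap.id
      else mk1 ⟨j.val, by omega⟩ ⟨j.val + 1, by omega⟩ LinearMap.id) = _
    rw [if_neg (by omega), if_neg (by omega)]
    congr 1
    · exact Fin.ext (show j.val = src.val by omega)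
    · exact Fin.ext (show j.val + 1 = dst.val by omega)
  have aB2 : ∀ (j : Fin e) (src dst : Fin (e+1)), j.val + 2 = e → src.val = e - 2 →
      dst.val = e → (band1 k e lam).a j = mk1 src dst LinearMap.id := by
    intro j src dst h1 h2 h3
    show (if j.val = e - 1 then mk1 (sndRow e) ⟨0, by omega⟩ LinearMap.id
      else if j.val = e - 2 then mk1 ⟨e - 2, by omega⟩ (lastRow e) LinearMap.id
      else mk1 ⟨j.val, by omega⟩ ⟨j.val + 1, by omega⟩ LinearMap.id) = _
    rw [if_neg (by omega), if_pos (by omega)]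
    congr 1
    · exact Fin.ext (show e - 2 = src.val by omega)
    · exact Fin.ext (show e = dst.val by omega)
  have aB1 : ∀ (j : Fin e) (src dst : Fin (e+1)), j.val + 1 = e → src.val = e - 1 →
      dst.val = 0 → (band1 k e lam).a j = mk1 src dst LinearMap.id := by
    intro j src dst h1 h2 h3
    show (if j.val = e - 1 then mk1 (sndRow e) ⟨0, by omega⟩ LinearMap.id
      else if j.val = e - 2 then mk1 ⟨e - 2, by omega⟩ (lastRow e) LinearMap.id
      else mk1 ⟨j.val, by omega⟩ ⟨j.val + 1, by omega⟩ LinearMap.id) = _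
    rw [if_pos (by omega)]
    congr 1
    · exact Fin.ext (show e - 1 = src.val by omega)
    · exact Fin.ext (show 0 = dst.val by omega)
  -- g kills the basis vector of the last row (uses `lam ≠ 0`)
  have glast : g (Pi.single (lastRow e) 1) = 0 := by
    have h1 := LinearMap.congr_fun gd (Pi.single (sndRow e) 1)
    simp only [LinearMap.comp_apply] at h1
    have h2 : (band1 k e lam).d (Pi.single (sndRow e) 1) = lam • (Pi.single (lastRow e) 1 : Fin (e+1) → k) := by
      funext r0
      show (if r0 = lastRow e then (lam • LinearMap.id)
          ((Pi.single (sndRow e) 1 : Fin (e+1) → k) (sndRow e)) else 0) = _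
      rw [Pi.single_eq_same]
      by_cases hr : r0 = lastRow e
      · rw [if_pos hr, hr]; simp
      · rw [if_neg hr]
        simp [Pi.single_eq_of_ne hr]
    rw [h2, map_smul] at h1
    have h3 : (Puni k e i0).d (g (Pi.single (sndRow e) 1)) = 0 := rfl
    rw [h3] at h1
    exact (smul_eq_zero.mp h1).resolve_left hlam
  -- every image of h has zero component in the second-to-last row
  have hsnd : ∀ y, h y (sndRow e) = 0 := by
    intro y
    have h1 := congrFun (LinearMap.congr_fun hd y) (lastRow e)
    simp only [LinearMap.comp_apply] at h1
    have h2 : (Puni k e i0).d y = 0 := rfl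
    rw [h2, map_zero] at h1
    have h3 : ((band1 k e lam).d (h y)) (lastRow e) = lam * (h y) (sndRow e) := by
      show (if lastRow e = lastRow e then (lam • LinearMap.id) ((h y) (sndRow e)) else 0) = _
      rw [if_pos rfl]; rfl
    rw [h3] at h1
    have h4 : lam * (h y) (sndRow e) = 0 := by simpa using h1.symm
    exact (mul_eq_zero.mp h4).resolve_left hlam
  -- vertex support of g on basis vectors
  have gsupp : ∀ (r : Fin (e+1)) (l : Fin (2*e+1)),
      (i0 + l.val) % e ≠ (vrt e r).val → g (Pi.single r 1) l = 0 := by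
    intro r l hne
    set t : Fin e := ⟨(i0 + l.val) % e, Nat.mod_lt _ (by omega)⟩ with ht
    have h1 := congrFun (LinearMap.congr_fun (gv t) (Pi.single r 1)) l
    simp only [LinearMap.comp_apply] at h1
    have h2 : (band1 k e lam).v t (Pi.single r 1) = 0 := by
      funext r0
      show (if vrt e r0 = t then (Pi.single r 1 : Fin (e+1) → k) r0 else 0) = 0
      by_cases hr : r0 = r
      · subst hr
        rw [if_neg]
        intro hcon
        exact hne (by rw [hcon])
      · by_cases hvv : vrt e r0 = t
        · rw [if_pos hvv, Pi.single_eq_of_ne hr]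
        · rw [if_neg hvv]
    rw [h2, map_zero] at h1
    have h3 : ((Puni k e i0).v t (g (Pi.single r 1))) l = g (Pi.single r 1) l := by
      show (if (i0 + l.val) % e = t.val then g (Pi.single r 1) l else 0) = _
      rw [if_pos (by rw [ht])]
    rw [h3] at h1
    simpa using h1.symm
  -- single-step transport of coefficients of g along an arrow
  have gstepP : ∀ (j : Fin e) (r r' : Fin (e+1)),
      (band1 k e lam).a j (Pi.single r 1) = Pi.single r' 1 →
      ∀ (s s' : Fin (2*e+1)), s.val = s'.val + 1 → (i0 + s'.val) % e = j.val →
      g (Pi.single r' 1) s = g (Pi.single r 1) s' := by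
    intro j r r' harr s s' hs hmod
    have h1 := congrFun (LinearMap.congr_fun (ga j) (Pi.single r 1)) s
    simp only [LinearMap.comp_apply] at h1
    rw [harr] at h1
    rw [h1]
    show (∑ l : Fin (2*e), if (i0 + l.val) % e = j.val
        then mk1 l.castSucc l.succ LinearMap.id else 0) (g (Pi.single r 1)) s
      = g (Pi.single r 1) s'
    rw [LinearMap.sum_apply, Finset.sum_apply]
    refine (Finset.sum_eq_single (⟨s'.val, by omega⟩ : Fin (2*e)) ?_ ?_).trans ?_
    · intro l _ hl
      by_cases hc : (i0 + l.val) % e = j.val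
      · rw [if_pos hc]
        show (if s = l.succ then g (Pi.single r 1) l.castSucc else 0) = 0
        rw [if_neg]
        intro hcon
        have := congrArg Fin.val hcon
        simp only [Fin.val_succ] at this
        exact hl (Fin.ext (show l.val = s'.val by omega))
      · simp only [if_neg hc, LinearMap.zero_apply, Pi.zero_apply]
    · exact fun hm => absurd (Finset.mem_univ _) hm
    · rw [if_pos hmod]
      show (if s = Fin.succ ⟨s'.val, by omega⟩ then
        g (Pi.single r 1) (Fin.castSucc ⟨s'.val, by omega⟩) else 0) = _
      rw [show Fin.castSucc (⟨s'.val, by omega⟩ : Fin (2*e)) = s' from Fin.ext rfl,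
        if_pos (show s = Fin.succ (⟨s'.val, by omega⟩ : Fin (2*e)) from Fin.ext hs)]
  -- the arrows of Puni on basis vectors
  have aP_single : ∀ (t : Fin e) (ln ls : Fin (2*e+1)), ls.val = ln.val + 1 → ln.val < 2*e →
      (i0 + ln.val) % e = t.val →
      (Puni k e i0).a t (Pi.single ln 1) = Pi.single ls 1 := by
    intro t ln ls h1 h2 h3
    show (∑ l : Fin (2*e), if (i0 + l.val) % e = t.val
        then mk1 l.castSucc l.succ LinearMap.id else 0) (Pi.single ln 1) = Pi.single ls 1
    rw [LinearMap.sum_apply]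
    refine (Finset.sum_eq_single (⟨ln.val, h2⟩ : Fin (2*e)) ?_ ?_).trans ?_
    · intro l _ hl
      by_cases hc : (i0 + l.val) % e = t.val
      · rw [if_pos hc, mk1_single, if_neg]
        intro hcon
        have := congrArg Fin.val hcon
        simp only [Fin.coe_castSucc] at this
        exact hl (Fin.ext (show l.val = ln.val by omega))
      · simp only [if_neg hc, LinearMap.zero_apply]
    · exact fun hm => absurd (Finset.mem_univ _) hm
    · rw [if_pos h3, mk1_single,
        if_pos (show ln = Fin.castSucc (⟨ln.val, h2⟩ : Fin (2*e)) from Fin.ext rfl)]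
      rw [show Fin.succ (⟨ln.val, h2⟩ : Fin (2*e)) = ls
        from Fin.ext (show ln.val + 1 = ls.val by omega)]
  -- the main chain: transporting coefficients from row i0 forward to the last row
  have chain : ∀ (off : ℕ), off = 0 ∨ off = e → ∀ (l0 : Fin (2*e+1)), l0.val = off →
      ∀ (s : ℕ), i0 + s + 1 ≤ e →
      ∀ (rf : Fin (e+1)) (lf : Fin (2*e+1)),
      rf.val = (if i0 + s + 1 = e then e else i0 + s) → lf.val = s + off →
      g (Pi.single rf 1) lf
        = g (Pi.single (⟨i0, by omega⟩ : Fin (e+1)) 1) l0 := by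
    intro off hoff l0 hl0 s
    induction s with
    | zero =>
      intro hs rf lf hrf hlf
      rw [if_neg (by omega)] at hrf
      have h1 : rf = ⟨i0, by omega⟩ := Fin.ext (by show rf.val = i0; omega)
      have h2 : lf = l0 := Fin.ext (by omega)
      rw [h1, h2]
    | succ n ih =>
      intro hs rf lf hrf hlf
      have hoffe : off ≤ e := by rcases hoff with h0 | h0 <;> omega
      have harr : (band1 k e lam).a ⟨i0+n, by omega⟩
          (Pi.single (⟨i0+n, by omega⟩ : Fin (e+1)) 1) = Pi.single rf 1 := by
        by_cases hc : i0 + n + 2 = e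
        · rw [aB2 ⟨i0+n, by omega⟩ ⟨i0+n, by omega⟩ rf (show i0+n+2 = e from hc)
            (show i0+n = e-2 by omega)
            (by rw [if_pos (by omega)] at hrf; show rf.val = e; omega)]
          rw [mk1_single, if_pos rfl]
        · rw [aB3 ⟨i0+n, by omega⟩ ⟨i0+n, by omega⟩ rf (show i0+n+3 ≤ e by omega) rfl
            (by rw [if_neg (by omega)] at hrf; show rf.val = i0+n+1; omega)]
          rw [mk1_single, if_pos rfl]
      have hstep := gstepP ⟨i0+n, by omega⟩ ⟨i0+n, by omega⟩ rf harr lf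
        ⟨n + off, by omega⟩ (show lf.val = n + off + 1 by omega) ?_
      · rw [hstep]
        exact ih (by omega) ⟨i0+n, by omega⟩ ⟨n + off, by omega⟩
          (show i0+n = _ by rw [if_neg (by omega)]) rfl
      · show (i0 + (n + off)) % e = i0 + n
        rcases hoff with h0 | h0
        · rw [h0]
          exact Nat.mod_eq_of_lt (by omega)
        · rw [h0]
          have hq : i0 + (n + e) = (i0 + n) + e := by omega
          rw [hq, Nat.add_mod_right]
          exact Nat.mod_eq_of_lt (by omega)
  -- the basis vector of row i0 at coordinate 0 goes to zero
  have hzero0 : g (Pi.single (⟨i0, by omega⟩ : Fin (e+1)) 1)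
      (⟨0, by omega⟩ : Fin (2*e+1)) = 0 := by
    have h0 := chain 0 (Or.inl rfl) ⟨0, by omega⟩ rfl (e-1-i0) (by omega) (lastRow e)
      ⟨e-1-i0, by omega⟩ (by show (e:ℕ) = _; rw [if_pos (by omega)])
      (show e-1-i0 = e-1-i0 + 0 by omega)
    rw [glast] at h0
    exact h0.symm.trans rfl
  have hzeroe : g (Pi.single (⟨i0, by omega⟩ : Fin (e+1)) 1)
      (⟨e, by omega⟩ : Fin (2*e+1)) = 0 := by
    have h0 := chain e (Or.inr rfl) ⟨e, by omega⟩ rfl (e-1-i0) (by omega) (lastRow e)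
      ⟨e-1-i0+e, by omega⟩ (by show (e:ℕ) = _; rw [if_pos (by omega)])
      (show e-1-i0+e = e-1-i0 + e from rfl)
    rw [glast] at h0
    exact h0.symm.trans rfl
  -- chain from the second-to-last row around through vertex 1 back to row i0
  have chain3 : ∀ (s : ℕ), s ≤ i0 → ∀ (rf : Fin (e+1)) (lf : Fin (2*e+1)),
      rf.val = s → lf.val = e - i0 + s →
      g (Pi.single rf 1) lf
        = g (Pi.single (sndRow e) 1) (⟨e-1-i0, by omega⟩ : Fin (2*e+1)) := by
    intro s
    induction s with
    | zero =>
      intro hs rf lf hrf hlf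
      have harr : (band1 k e lam).a ⟨e-1, by omega⟩ (Pi.single (sndRow e) 1)
          = Pi.single rf 1 := by
        rw [aB1 ⟨e-1, by omega⟩ (sndRow e) rf (show e-1+1 = e by omega) rfl
          (show rf.val = 0 by omega)]
        rw [mk1_single, if_pos rfl]
      have hstep := gstepP ⟨e-1, by omega⟩ (sndRow e) rf harr lf
        ⟨e-1-i0, by omega⟩ (by show lf.val = e-1-i0+1; omega) ?_
      · exact hstep
      · show (i0 + (e-1-i0)) % e = e - 1
        have hq : i0 + (e-1-i0) = e - 1 := by omega
        rw [hq]
        exact Nat.mod_eq_of_lt (by omega)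
    | succ n ih =>
      intro hs rf lf hrf hlf
      have harr : (band1 k e lam).a ⟨n, by omega⟩
          (Pi.single (⟨n, by omega⟩ : Fin (e+1)) 1) = Pi.single rf 1 := by
        rw [aB3 ⟨n, by omega⟩ ⟨n, by omega⟩ rf (show n+3 ≤ e by omega) rfl
          (show rf.val = n+1 by omega)]
        rw [mk1_single, if_pos rfl]
      have hstep := gstepP ⟨n, by omega⟩ ⟨n, by omega⟩ rf harr lf
        ⟨e-i0+n, by omega⟩ (by show lf.val = e-i0+n+1; omega) ?_
      · rw [hstep]
        exact ih (by omega) ⟨n, by omega⟩ ⟨e-i0+n, by omega⟩ rfl rfl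
      · show (i0 + (e-i0+n)) % e = n
        have hq : i0 + (e-i0+n) = n + e := by omega
        rw [hq, Nat.add_mod_right]
        exact Nat.mod_eq_of_lt (by omega)
  have hsnd0 : g (Pi.single (sndRow e) 1) (⟨e-1-i0, by omega⟩ : Fin (2*e+1)) = 0 := by
    have h0 := chain3 i0 le_rfl ⟨i0, by omega⟩ ⟨e, by omega⟩ rfl
      (show (e:ℕ) = e - i0 + i0 by omega)
    exact h0.symm.trans hzeroe
  -- the image of g is supported on coordinates ≥ e - i0
  have claimG : ∀ (r : Fin (e+1)) (l : Fin (2*e+1)), i0 + l.val + 1 ≤ e →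
      g (Pi.single r 1) l = 0 := by
    intro r l hl
    by_cases hvv : (i0 + l.val) % e = (vrt e r).val
    · have hmod : (i0 + l.val) % e = i0 + l.val := Nat.mod_eq_of_lt (by omega)
      rw [hmod] at hvv
      by_cases hr : r.val < e - 1
      · simp only [vrt] at hvv
        rw [dif_pos hr] at hvv
        have hreq : r.val = i0 + l.val := hvv.symm
        have h0 := chain 0 (Or.inl rfl) ⟨0, by omega⟩ rfl l.val (by omega) r l
          (by rw [if_neg (by omega)]; omega) (by omega)
        rw [h0]
        exact hzero0
      · simp only [vrt] at hvv
        rw [dif_neg hr] at hvv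
        have hv' : i0 + l.val = e - 1 := hvv.trans rfl
        have hrl := r.isLt
        by_cases hre0 : r.val = e - 1
        · have hre : r = sndRow e := Fin.ext (by show r.val = e - 1; omega)
          have hle : l = ⟨e-1-i0, by omega⟩ := Fin.ext (by show l.val = e-1-i0; omega)
          rw [hre, hle]
          exact hsnd0
        · have hre : r = lastRow e := Fin.ext (by show r.val = e; omega)
          rw [hre]
          exact congrFun glast l
    · exact gsupp r l hvv
  -- h kills all basis vectors at coordinates ≥ e - i0
  have claimH : ∀ (l : Fin (2*e+1)), e ≤ i0 + l.val → h (Pi.single l 1) = 0 := by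
    suffices H : ∀ n : ℕ, ∀ (l : Fin (2*e+1)), l.val = n → e ≤ i0 + n →
        h (Pi.single l 1) = 0 by
      intro l hl; exact H l.val l rfl hl
    intro n
    induction n with
    | zero => intro l h1 h2; exact absurd h2 (by omega)
    | succ n ih =>
      intro l hln hge
      have hl2 := l.isLt
      by_cases hbase : e = i0 + (n+1)
      · have harr := aP_single ⟨e-1, by omega⟩ ⟨n, by omega⟩ l (show l.val = n+1 by omega)
          (show n < 2*e by omega)
          (by show (i0 + n) % e = e - 1
              have hq : i0 + n = e - 1 := by omega
              rw [hq]
              exact Nat.mod_eq_of_lt (by omega))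
        have h1 := LinearMap.congr_fun (ha ⟨e-1, by omega⟩)
          (Pi.single (⟨n, by omega⟩ : Fin (2*e+1)) 1)
        rw [LinearMap.comp_apply, LinearMap.comp_apply] at h1
        rw [harr] at h1
        rw [h1, aB1 ⟨e-1, by omega⟩ (sndRow e) ⟨0, by omega⟩ (show e-1+1 = e by omega) rfl rfl]
        funext r0
        show (if r0 = (⟨0, by omega⟩ : Fin (e+1)) then
          (h (Pi.single (⟨n, by omega⟩ : Fin (2*e+1)) 1)) (sndRow e) else 0) = 0
        rw [hsnd]
        split_ifs <;> rfl
      · have harr := aP_single ⟨(i0+n) % e, Nat.mod_lt _ (by omega)⟩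
          ⟨n, by omega⟩ l (show l.val = n+1 by omega) (show n < 2*e by omega) rfl
        have h1 := LinearMap.congr_fun (ha ⟨(i0+n) % e, Nat.mod_lt _ (by omega)⟩)
          (Pi.single (⟨n, by omega⟩ : Fin (2*e+1)) 1)
        rw [LinearMap.comp_apply, LinearMap.comp_apply] at h1
        rw [harr] at h1
        rw [h1, ih ⟨n, by omega⟩ rfl (by omega), map_zero]
  -- assemble
  apply LinearMap.ext
  intro x
  rw [LinearMap.comp_apply, LinearMap.zero_apply]
  rw [← Finset.univ_sum_single x, map_sum, map_sum]
  apply Finset.sum_eq_zero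
  intro r _
  have hx1 : Pi.single r (x r) = x r • (Pi.single r 1 : Fin (e+1) → k) := by
    rw [← Pi.single_smul, smul_eq_mul, mul_one]
  rw [hx1, map_smul, map_smul]
  suffices hz : h (g (Pi.single r 1)) = 0 by rw [hz, smul_zero]
  rw [← Finset.univ_sum_single (g (Pi.single r 1)), map_sum]
  apply Finset.sum_eq_zero
  intro l _
  have hx2 : Pi.single l (g (Pi.single r 1) l)
      = (g (Pi.single r 1) l) • (Pi.single l 1 : Fin (2*e+1) → k) := by
    rw [← Pi.single_smul, smul_eq_mul, mul_one]
  rw [hx2, map_smul]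
  by_cases hcase : i0 + l.val + 1 ≤ e
  · rw [claimG r l hcase, zero_smul]
  · rw [claimH l (by omega), smul_zero]

/-- For `1 ≤ i ≤ e-1`, every composite `B(1,λ) → P_i → B(1,λ)`
of `Λ_e`-homomorphisms is zero; in particular every endomorphism of `B(1,λ)`
factoring through `P_i` vanishes. -/
theorem band1_through_Pi (k : Type) [Field k] (e : ℕ) (he : 2 ≤ e) [NeZero e]
    (lam : k) (hlam : lam ≠ 0) (i : ℕ) (hi : 1 ≤ i) (hie : i ≤ e - 1) :
    (∀ g ∈ homSet (band1 k e lam) (Puni k e (i - 1)),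
      ∀ h ∈ homSet (Puni k e (i - 1)) (band1 k e lam), h ∘ₗ g = 0) ∧
    (∀ f : (band1 k e lam).V →ₗ[k] (band1 k e lam).V,
      (∃ g ∈ homSet (band1 k e lam) (Puni k e (i - 1)),
        ∃ h ∈ homSet (Puni k e (i - 1)) (band1 k e lam), f = h ∘ₗ g) → f = 0) := by
  constructor
  · exact key k e he lam hlam (i - 1) (by omega)
  · rintro f ⟨g, hg, h, hh, rfl⟩
    exact key k e he lam hlam (i - 1) (by omega) g hg h hh

end GBTA
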